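/- For every integer n ≥ 1 and every λ ∈ ℤ, the finite sum ∑_{i=2}^{n+1} [ (i−2n)(n+i) + (i+(λ−1)n)(i−λn) ] equals −(1/12)(26 + 2(6λ²−6λ+1))(n³−n) + (1/12)(26 − 2(6λ²−6λ+1)) n. (This identity computes the failure [ρ(L_n), ρ(L_{−n})]ω₀ − ρ([L_n, L_{−n}])ω₀ of the semi-infinite wedge action of g_λ on the vacuum, and identifies the central charge of the semi-infinite wedge representation as −(26 + 2(6λ²−6λ+1)) together with the coboundary term absorbed by the choice of β.) -/

import Mathlib

lemma stmt7_aux (a b c : ℚ) : ∀ n : ℤ, 1 ≤ n →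
    ∑ i ∈ Finset.Icc (2 : ℤ) (n + 1), (a * (i : ℚ) ^ 2 + b * (i : ℚ) + c)
      = a * (((n : ℚ) + 1) * ((n : ℚ) + 2) * (2 * (n : ℚ) + 3) / 6 - 1)
        + b * (((n : ℚ) + 1) * ((n : ℚ) + 2) / 2 - 1) + c * (n : ℚ) := by
  refine Int.le_induction ?_ ?_
  · norm_num
  · intro n hn ih
    have h : (2 : ℤ) ≤ n + 1 + 1 := by omega
    have hset : Finset.Icc (2:ℤ) (n + 1 + 1) = insert (n + 1 + 1) (Finset.Icc (2:ℤ) (n + 1)) := by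
      ext x; simp only [Finset.mem_Icc, Finset.mem_insert]; omega
    rw [hset, Finset.sum_insert (by simp only [Finset.mem_Icc]; omega), ih]
    push_cast
    ring

/-- For every integer `n ≥ 1` and every `λ ∈ ℤ`,
`∑_{i=2}^{n+1} [ (i−2n)(n+i) + (i+(λ−1)n)(i−λn) ]
  = −(1/12)(26 + 2(6λ²−6λ+1))(n³−n) + (1/12)(26 − 2(6λ²−6λ+1)) n`,
an identity of rational numbers.  This computes the failure
`[ρ(L_n), ρ(L_{−n})]ω₀ − ρ([L_n, L_{−n}])ω₀` of the semi-infinite wedge action of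
`g_λ` on the vacuum, identifying the central charge `−(26 + 2(6λ²−6λ+1))`. -/
theorem stmt7 (n : ℤ) (hn : 1 ≤ n) (lam : ℤ) :
    ∑ i ∈ Finset.Icc (2 : ℤ) (n + 1),
      (((i : ℚ) - 2 * (n : ℚ)) * ((n : ℚ) + (i : ℚ)) +
        ((i : ℚ) + ((lam : ℚ) - 1) * (n : ℚ)) * ((i : ℚ) - (lam : ℚ) * (n : ℚ)))
    = -(1 / 12) * (26 + 2 * (6 * (lam : ℚ) ^ 2 - 6 * (lam : ℚ) + 1)) * ((n : ℚ) ^ 3 - (n : ℚ))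
      + (1 / 12) * (26 - 2 * (6 * (lam : ℚ) ^ 2 - 6 * (lam : ℚ) + 1)) * (n : ℚ) := by
  have key := stmt7_aux 2 (-2 * (n : ℚ)) ((n : ℚ) ^ 2 * ((lam : ℚ) - (lam : ℚ) ^ 2 - 2)) n hn
  have h2 : ∀ i ∈ Finset.Icc (2:ℤ) (n + 1),
      (((i : ℚ) - 2 * (n : ℚ)) * ((n : ℚ) + (i : ℚ)) +
        ((i : ℚ) + ((lam : ℚ) - 1) * (n : ℚ)) * ((i : ℚ) - (lam : ℚ) * (n : ℚ)))
      = 2 * (i : ℚ) ^ 2 + -2 * (n : ℚ) * (i : ℚ) + (n : ℚ) ^ 2 * ((lam : ℚ) - (lam : ℚ) ^ 2 - 2) :=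
    fun i _ => by ring
  rw [Finset.sum_congr rfl h2, key]
  ring
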